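/- Let D be a Prüfer domain, ℓ a length function on D, and I an ideal of D whose radical P = rad(I) is prime. Then ℓ(D/I) = ℓ(D_P/ID_P), where D_P/ID_P is regarded as a D-module. -/

import Mathlib

open scoped ENNReal

universe u

structure LengthFunction (R : Type u) [CommRing R] where
  toFun : ∀ (M : Type u) [AddCommGroup M] [Module R M], ℝ≥0∞
  zero' : ∀ (M : Type u) [AddCommGroup M] [Module R M], Subsingleton M → toFun M = 0
  additive : ∀ (M₁ M₂ M₃ : Type u) [AddCommGroup M₁] [Module R M₁]
      [AddCommGroup M₂] [Module R M₂] [AddCommGroup M₃] [Module R M₃]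
      (f : M₁ →ₗ[R] M₂) (g : M₂ →ₗ[R] M₃),
      Function.Injective f → Function.Surjective g →
      LinearMap.range f = LinearMap.ker g →
      toFun M₂ = toFun M₁ + toFun M₃
  upperContinuous : ∀ (M : Type u) [AddCommGroup M] [Module R M],
      toFun M = ⨆ (N : Submodule R M) (_ : N.FG), toFun N

namespace LengthFunction

variable {D : Type u} [CommRing D] (ℓ : LengthFunction D)
variable {M M' : Type u} [AddCommGroup M] [Module D M] [AddCommGroup M'] [Module D M']

lemma congr (e : M ≃ₗ[D] M') : ℓ.toFun M = ℓ.toFun M' := by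
  have h := ℓ.additive M M' PUnit e.toLinearMap 0 e.injective
    (Function.surjective_to_subsingleton _)
    (by rw [LinearEquiv.range, LinearMap.ker_zero])
  rw [h, ℓ.zero' PUnit inferInstance, add_zero]

lemma sub_add (N : Submodule D M) : ℓ.toFun M = ℓ.toFun N + ℓ.toFun (M ⧸ N) :=
  ℓ.additive _ _ _ N.subtype N.mkQ N.injective_subtype N.mkQ_surjective
    (by rw [Submodule.range_subtype, Submodule.ker_mkQ])

lemma le_of_inj (f : M →ₗ[D] M') (hf : Function.Injective f) : ℓ.toFun M ≤ ℓ.toFun M' := by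
  rw [ℓ.sub_add (LinearMap.range f), ← ℓ.congr (LinearEquiv.ofInjective f hf)]
  exact le_self_add

lemma le_of_surj (f : M →ₗ[D] M') (hf : Function.Surjective f) : ℓ.toFun M' ≤ ℓ.toFun M := by
  rw [ℓ.sub_add (LinearMap.ker f), ℓ.congr (f.quotKerEquivOfSurjective hf)]
  exact le_add_self

lemma mono {N₁ N₂ : Submodule D M} (h : N₁ ≤ N₂) : ℓ.toFun N₁ ≤ ℓ.toFun N₂ :=
  ℓ.le_of_inj (Submodule.inclusion h) (Submodule.inclusion_injective h)

lemma le_module (N : Submodule D M) : ℓ.toFun N ≤ ℓ.toFun M :=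
  ℓ.le_of_inj N.subtype N.injective_subtype

lemma sup_zero {U V : Submodule D M} (hU : ℓ.toFun U = 0) (hV : ℓ.toFun V = 0) :
    ℓ.toFun ↥(U ⊔ V) = 0 := by
  set W := U ⊔ V
  set U' : Submodule D W := Submodule.comap W.subtype U
  have h1 : ℓ.toFun ↥U' = 0 := by
    rw [ℓ.congr (Submodule.comapSubtypeEquivOfLe (le_sup_left : U ≤ W))]; exact hU
  have h2 : ℓ.toFun (W ⧸ U') = 0 := by
    have hs : Function.Surjective (U'.mkQ ∘ₗ Submodule.inclusion (le_sup_right : V ≤ W)) := by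
      rintro q
      obtain ⟨w, rfl⟩ := U'.mkQ_surjective q
      obtain ⟨a, ha, b, hb, hab⟩ := Submodule.mem_sup.mp w.2
      refine ⟨⟨b, hb⟩, ?_⟩
      simp only [LinearMap.comp_apply, Submodule.mkQ_apply]
      rw [Submodule.Quotient.eq]
      exact show (_ : M) ∈ U by simpa using show ((Submodule.inclusion le_sup_right ⟨b, hb⟩ : W) : M) - (w : M) ∈ U by simp [← hab, ha, neg_mem, Submodule.coe_inclusion]
    have := ℓ.le_of_surj _ hs
    exact le_antisymm (le_trans this (le_of_eq hV)) zero_le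
  rw [ℓ.sub_add U', h1, h2, add_zero]

lemma cyclic_le (w : M) (A : Ideal D) (hA : ∀ a ∈ A, a • w = 0) :
    ℓ.toFun ↥(Submodule.span D {w}) ≤ ℓ.toFun (D ⧸ A) := by
  let f : D →ₗ[D] M := LinearMap.toSpanSingleton D M w
  have hr : Submodule.span D {w} = LinearMap.range f := LinearMap.span_singleton_eq_range D M w
  rw [ℓ.congr (LinearEquiv.ofEq _ _ hr)]
  have hker : A ≤ LinearMap.ker f.rangeRestrict := by
    intro a ha
    simp only [LinearMap.mem_ker]
    ext
    show (f a : M) = 0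
    exact hA a ha
  refine ℓ.le_of_surj (Submodule.liftQ A f.rangeRestrict hker) ?_
  intro y
  obtain ⟨d, hd⟩ := f.surjective_rangeRestrict y
  exact ⟨Submodule.Quotient.mk d, hd⟩

lemma eq_zero_of_cyclic (h : ∀ w : M, ∃ A : Ideal D, ℓ.toFun (D ⧸ A) = 0 ∧ ∀ a ∈ A, a • w = 0) :
    ℓ.toFun M = 0 := by
  classical
  have hspan : ∀ T : Finset M, ℓ.toFun ↥(Submodule.span D (T : Set M)) = 0 := by
    intro T
    induction T using Finset.induction_on with
    | empty =>
        refine ℓ.zero' _ ?_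
        simp only [Finset.coe_empty, Submodule.span_empty]
        infer_instance
    | @insert a T ha ih =>
        rw [Finset.coe_insert, Submodule.span_insert]
        refine ℓ.sup_zero ?_ ih
        obtain ⟨A, hA0, hA⟩ := h a
        exact le_antisymm (le_trans (ℓ.cyclic_le a A hA) (le_of_eq hA0)) zero_le
  rw [ℓ.upperContinuous M]
  refine le_antisymm ?_ zero_le
  refine iSup_le fun N => iSup_le fun hN => ?_
  obtain ⟨T, hT⟩ := hN
  rw [← hT]
  exact le_of_eq (hspan T)

end LengthFunction
section StepA

variable {D : Type u} [CommRing D] (I P : Ideal D) [P.IsPrime]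

noncomputable def psiMap (s : P.primeCompl) :
    D →ₗ[D] (Localization.AtPrime P ⧸ I.map (algebraMap D (Localization.AtPrime P))) :=
  (((I.map (algebraMap D (Localization.AtPrime P))).mkQ).restrictScalars D).comp
    ((LinearMap.mulLeft D
        (IsLocalization.mk' (Localization.AtPrime P) (1 : D) s)).comp
      (Algebra.linearMap D (Localization.AtPrime P)))

lemma psiMap_apply (s : P.primeCompl) (d : D) :
    psiMap I P s d = Submodule.Quotient.mk
      (IsLocalization.mk' (Localization.AtPrime P) (1 : D) s *
        algebraMap D (Localization.AtPrime P) d) := rfl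

lemma ker_psiMap (s : P.primeCompl) :
    LinearMap.ker (psiMap I P s) =
      (I.map (algebraMap D (Localization.AtPrime P))).comap
        (algebraMap D (Localization.AtPrime P)) := by
  have hu : IsLocalization.mk' (Localization.AtPrime P) (1 : D) s *
      algebraMap D (Localization.AtPrime P) (s : D) = 1 := by
    rw [IsLocalization.mk'_spec]; exact map_one _
  ext d
  rw [LinearMap.mem_ker, psiMap_apply, Submodule.Quotient.mk_eq_zero, Ideal.mem_comap]
  constructor
  · intro h
    have := Ideal.mul_mem_left _ (algebraMap D (Localization.AtPrime P) (s : D)) h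
    rwa [← mul_assoc, mul_comm (algebraMap D (Localization.AtPrime P) (s : D)), hu, one_mul]
      at this
  · intro h
    exact Ideal.mul_mem_left _ _ h

lemma psiMap_range_mono (s t : P.primeCompl) :
    LinearMap.range (psiMap I P s) ≤ LinearMap.range (psiMap I P (s * t)) := by
  rintro _ ⟨d, rfl⟩
  refine ⟨(t : D) * d, ?_⟩
  rw [psiMap_apply, psiMap_apply]
  congr 1
  rw [mul_comm (IsLocalization.mk' (Localization.AtPrime P) (1:D) (s*t)) _,
    mul_comm (IsLocalization.mk' (Localization.AtPrime P) (1:D) s) _,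
    ← IsLocalization.mk'_eq_mul_mk'_one, ← IsLocalization.mk'_eq_mul_mk'_one,
    show (t : D) * d = d * (t : D) from mul_comm _ _, IsLocalization.mk'_cancel]

lemma psiMap_cover (y : Localization.AtPrime P ⧸ I.map (algebraMap D (Localization.AtPrime P))) :
    ∃ (s : P.primeCompl) (d : D), psiMap I P s d = y := by
  obtain ⟨r, rfl⟩ := Submodule.Quotient.mk_surjective _ y
  obtain ⟨⟨d, s⟩, rfl⟩ := IsLocalization.mk'_surjective P.primeCompl r
  exact ⟨s, d, by
    rw [psiMap_apply, mul_comm, ← IsLocalization.mk'_eq_mul_mk'_one]⟩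

end StepA

lemma stepA {D : Type u} [CommRing D] (ℓ : LengthFunction D) (I P : Ideal D) [P.IsPrime] :
    ℓ.toFun (Localization.AtPrime P ⧸ I.map (algebraMap D (Localization.AtPrime P))) =
    ℓ.toFun (D ⧸ (I.map (algebraMap D (Localization.AtPrime P))).comap
      (algebraMap D (Localization.AtPrime P))) := by
  classical
  set J := (I.map (algebraMap D (Localization.AtPrime P))).comap
      (algebraMap D (Localization.AtPrime P)) with hJdef
  have hrange : ∀ s : P.primeCompl,
      ℓ.toFun ↥(LinearMap.range (psiMap I P s)) = ℓ.toFun (D ⧸ J) := by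
    intro s
    have e := (psiMap I P s).quotKerEquivRange
    rw [ker_psiMap] at e
    exact (ℓ.congr e).symm
  apply le_antisymm
  · rw [ℓ.upperContinuous
      (Localization.AtPrime P ⧸ I.map (algebraMap D (Localization.AtPrime P)))]
    refine iSup_le fun N => iSup_le fun hN => ?_
    obtain ⟨T, hT⟩ := hN
    have hex : ∀ T : Finset (Localization.AtPrime P ⧸
        I.map (algebraMap D (Localization.AtPrime P))), ∃ s : P.primeCompl,
        ∀ x ∈ T, x ∈ LinearMap.range (psiMap I P s) := by
      intro T
      induction T using Finset.induction_on with
      | empty => exact ⟨1, by simp⟩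
      | @insert a T ha ih =>
          obtain ⟨s, hs⟩ := ih
          obtain ⟨t, d, hd⟩ := psiMap_cover I P a
          have h2 : LinearMap.range (psiMap I P s) ≤ LinearMap.range (psiMap I P (t * s)) := by
            have := psiMap_range_mono I P s t
            rwa [mul_comm s t] at this
          refine ⟨t * s, fun x hx => ?_⟩
          rcases Finset.mem_insert.mp hx with rfl | hx
          · exact psiMap_range_mono I P t s ⟨d, hd⟩
          · exact h2 (hs x hx)
    obtain ⟨s, hs⟩ := hex T
    have hNle : N ≤ LinearMap.range (psiMap I P s) := by
      rw [← hT]; exact Submodule.span_le.mpr (fun x hx => hs x hx)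
    calc ℓ.toFun ↥N ≤ ℓ.toFun ↥(LinearMap.range (psiMap I P s)) := ℓ.mono hNle
      _ = ℓ.toFun (D ⧸ J) := hrange s
  · refine ℓ.le_of_inj (Submodule.liftQ J (psiMap I P 1) (le_of_eq (ker_psiMap I P 1).symm)) ?_
    rw [← LinearMap.ker_eq_bot]
    exact Submodule.ker_liftQ_eq_bot J _ _ (le_of_eq (ker_psiMap I P 1))

/-- A Prüfer domain: the localization at every prime ideal is a valuation domain. -/
def IsPruferDomain (D : Type u) [CommRing D] [IsDomain D] : Prop :=
  ∀ (P : Ideal D) (hP : P.IsPrime), haveI := hP; ValuationRing (Localization.AtPrime P)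

lemma loc_extract {D : Type u} [CommRing D] (A m : Ideal D) [m.IsPrime] {y : D}
    (h : algebraMap D (Localization.AtPrime m) y ∈
      A.map (algebraMap D (Localization.AtPrime m))) :
    ∃ u, u ∉ m ∧ u * y ∈ A := by
  obtain ⟨⟨i, u⟩, he⟩ := (IsLocalization.mem_map_algebraMap_iff m.primeCompl _).mp h
  rw [← map_mul] at he
  obtain ⟨w, hw⟩ := (IsLocalization.eq_iff_exists m.primeCompl _).mp he
  refine ⟨(w : D) * (u : D), fun hmem => (m.primeCompl.mul_mem w.2 u.2) hmem, ?_⟩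
  have h2 : (w : D) * (u : D) * y = (w : D) * (i : D) := by
    calc (w : D) * (u : D) * y = (w : D) * (y * (u : D)) := by ring
      _ = (w : D) * (i : D) := hw
  rw [h2]
  exact A.mul_mem_left _ i.2

lemma key_local {D : Type u} [CommRing D] [IsDomain D] (hD : IsPruferDomain D)
    (I P : Ideal D) [P.IsPrime] (hrad : I.radical = P)
    {x s j : D} (hs : s ∉ P) (hsx : s * x ∈ I) (hj : j ∈ P) : j * x ∈ I := by
  refine Ideal.mem_of_localization_maximal fun m hm => ?_
  by_cases hPm : P ≤ m
  · haveI := hm.isPrime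
    haveI := hD m hm.isPrime
    obtain ⟨c, hc | hc⟩ := ValuationRing.cond (algebraMap D (Localization.AtPrime m) j)
      (algebraMap D (Localization.AtPrime m) s)
    · exfalso
      have hsP : algebraMap D (Localization.AtPrime m) s ∈
          P.map (algebraMap D (Localization.AtPrime m)) := by
        rw [← hc]
        exact Ideal.mul_mem_right _ _ (Ideal.mem_map_of_mem _ hj)
      obtain ⟨u, hu, hus⟩ := loc_extract P m hsP
      have huP : u ∉ P := fun h => hu (hPm h)
      exact hs ((Ideal.IsPrime.mem_or_mem inferInstance hus).resolve_left huP)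
    · have heq : algebraMap D (Localization.AtPrime m) (j * x) =
          algebraMap D (Localization.AtPrime m) (s * x) * c := by
        rw [map_mul, map_mul, ← hc]; ring
      rw [heq]
      exact Ideal.mul_mem_right _ _ (Ideal.mem_map_of_mem _ hsx)
  · have htop : I.map (algebraMap D (Localization.AtPrime m)) = ⊤ := by
      obtain ⟨i, hiI, him⟩ : ∃ i ∈ I, i ∉ m := by
        by_contra hcon
        push_neg at hcon
        exact hPm (by
          rw [← hrad]
          exact le_trans (Ideal.radical_mono hcon) (le_of_eq hm.isPrime.radical))
      exact Ideal.eq_top_of_isUnit_mem _ (Ideal.mem_map_of_mem _ hiI)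
        (IsLocalization.map_units _ (⟨i, him⟩ : m.primeCompl))
    rw [htop]; trivial

namespace LengthFunction

variable {D : Type u} [CommRing D] (ℓ : LengthFunction D)

lemma quot_mono {M : Type u} [AddCommGroup M] [Module D M] {N₁ N₂ : Submodule D M}
    (h : N₁ ≤ N₂) : ℓ.toFun (M ⧸ N₂) ≤ ℓ.toFun (M ⧸ N₁) := by
  refine ℓ.le_of_surj (Submodule.mapQ N₁ N₂ LinearMap.id h) ?_
  intro y
  obtain ⟨x, rfl⟩ := N₂.mkQ_surjective y
  exact ⟨N₁.mkQ x, by rw [Submodule.mkQ_apply, Submodule.mapQ_apply, LinearMap.id_apply]; rfl⟩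

lemma chain_infinite (J : Ideal D) {s : D}
    (hsat : ∀ d, s * d ∈ J → d ∈ J)
    (hc : ℓ.toFun (D ⧸ (J ⊔ Ideal.span {s})) ≠ 0) :
    ℓ.toFun (D ⧸ J) = ⊤ := by
  set c := ℓ.toFun (D ⧸ (J ⊔ Ideal.span {s})) with hcdef
  set V : ℕ → Submodule D (D ⧸ J) :=
    fun n => Submodule.map J.mkQ (Ideal.span {s ^ n} : Ideal D) with hVdef
  have hsatn : ∀ n d, s ^ n * d ∈ J → d ∈ J := by
    intro n
    induction n with
    | zero => intro d hd; rwa [pow_zero, one_mul] at hd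
    | succ n ih =>
        intro d hd
        rw [pow_succ, mul_assoc] at hd
        exact hsat d (ih _ hd)
  have hVle : ∀ n, V (n + 1) ≤ V n := by
    intro n
    refine Submodule.map_mono ?_
    rw [Ideal.span_singleton_le_span_singleton]
    exact ⟨s, pow_succ s n⟩
  have hstep : ∀ n, ℓ.toFun ↥(V n) = ℓ.toFun ↥(V (n + 1)) + c := by
    intro n
    set U : Submodule D ↥(V n) := Submodule.comap (V n).subtype (V (n + 1)) with hUdef
    have h1 : ℓ.toFun ↥(V n) = ℓ.toFun ↥U + ℓ.toFun (↥(V n) ⧸ U) := ℓ.sub_add U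
    have h2 : ℓ.toFun ↥U = ℓ.toFun ↥(V (n + 1)) :=
      ℓ.congr (Submodule.comapSubtypeEquivOfLe (hVle n))
    have h3 : ℓ.toFun (↥(V n) ⧸ U) = c := by
      have hmem : ∀ d : D, J.mkQ (d • s ^ n) ∈ V n := fun d =>
        ⟨d • s ^ n, Submodule.smul_mem _ d (Ideal.subset_span rfl), rfl⟩
      set g : D →ₗ[D] ↥(V n) :=
        LinearMap.codRestrict (V n) (J.mkQ.comp (LinearMap.toSpanSingleton D D (s ^ n)))
          hmem with hgdef
      have hgsurj : Function.Surjective g := by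
        rintro ⟨y, hy⟩
        obtain ⟨z, hz, hzy⟩ := hy
        obtain ⟨d, hd⟩ := Ideal.mem_span_singleton'.mp hz
        refine ⟨d, Subtype.ext ?_⟩
        show J.mkQ (d • s ^ n) = y
        rw [← hzy, smul_eq_mul, hd]
      set g2 : D →ₗ[D] (↥(V n) ⧸ U) := U.mkQ.comp g with hg2def
      have hg2surj : Function.Surjective g2 := (U.mkQ_surjective).comp hgsurj
      have hker : LinearMap.ker g2 = J ⊔ Ideal.span {s} := by
        ext d
        rw [LinearMap.mem_ker, hg2def, LinearMap.comp_apply, Submodule.mkQ_apply,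
          Submodule.Quotient.mk_eq_zero, hUdef, Submodule.mem_comap]
        have hgd : ((V n).subtype (g d) : D ⧸ J) = J.mkQ (d * s ^ n) := by
          show J.mkQ (d • s ^ n) = _
          rw [smul_eq_mul]
        rw [hgd, hVdef]
        have hmm : J.mkQ (d * s ^ n) ∈
            Submodule.map J.mkQ (Ideal.span {s ^ (n + 1)} : Ideal D) ↔
            d * s ^ n ∈ J ⊔ (Ideal.span {s ^ (n + 1)} : Ideal D) := by
          constructor
          · intro h
            have : d * s ^ n ∈ Submodule.comap J.mkQ
                (Submodule.map J.mkQ (Ideal.span {s ^ (n + 1)} : Ideal D)) := h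
            rwa [Submodule.comap_map_mkQ] at this
          · intro h
            have : d * s ^ n ∈ Submodule.comap J.mkQ
                (Submodule.map J.mkQ (Ideal.span {s ^ (n + 1)} : Ideal D)) := by
              rwa [Submodule.comap_map_mkQ]
            exact this
        rw [hmm]
        constructor
        · intro h
          obtain ⟨j, hj, z, hz, hjz⟩ := Submodule.mem_sup.mp h
          obtain ⟨e, he⟩ := Ideal.mem_span_singleton'.mp hz
          have hde : s ^ n * (d - e * s) ∈ J := by
            have h4 : s ^ n * (d - e * s) = j := by
              rw [← he, pow_succ] at hjz
              linear_combination -hjz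
            rw [h4]; exact hj
          have hdJ : d - e * s ∈ J := hsatn n _ hde
          have : d = (d - e * s) + e * s := by ring
          rw [this]
          exact Submodule.add_mem _ (Submodule.mem_sup_left hdJ)
            (Submodule.mem_sup_right (Ideal.mem_span_singleton'.mpr ⟨e, rfl⟩))
        · intro h
          obtain ⟨j, hj, z, hz, hjz⟩ := Submodule.mem_sup.mp h
          obtain ⟨e, he⟩ := Ideal.mem_span_singleton'.mp hz
          have : d * s ^ n = j * s ^ n + e * s ^ (n + 1) := by
            rw [← hjz, ← he, pow_succ]; ring
          rw [this]
          exact Submodule.add_mem _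
            (Submodule.mem_sup_left (Ideal.mul_mem_right _ _ hj))
            (Submodule.mem_sup_right (Ideal.mem_span_singleton'.mpr ⟨e, rfl⟩))
      have := ℓ.congr (g2.quotKerEquivOfSurjective hg2surj)
      rw [hker] at this
      rw [← this, hcdef]
    rw [h1, h2, h3]
  have h0 : ℓ.toFun (D ⧸ J) = ℓ.toFun ↥(V 0) := by
    have hV0 : V 0 = ⊤ := by
      rw [hVdef]
      simp only [pow_zero, Ideal.span_singleton_one]
      rw [Submodule.map_top, Submodule.range_mkQ]
    rw [hV0]
    exact (ℓ.congr (Submodule.topEquiv)).symm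
  have hn : ∀ n : ℕ, ℓ.toFun (D ⧸ J) = ℓ.toFun ↥(V n) + n * c := by
    intro n
    induction n with
    | zero => simp [← h0]
    | succ n ih =>
        rw [ih, hstep n]
        push_cast
        ring
  have hge : ∀ n : ℕ, (n : ℝ≥0∞) * c ≤ ℓ.toFun (D ⧸ J) := fun n => by
    rw [hn n]; exact le_add_self
  by_contra hne
  by_cases hctop : c = ⊤
  · have := hge 1
    rw [Nat.cast_one, one_mul, hctop, top_le_iff] at this
    exact hne this
  · have hdiv : ℓ.toFun (D ⧸ J) / c ≠ ⊤ :=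
      (ENNReal.div_lt_top hne hc).ne
    obtain ⟨n, hnlt⟩ := ENNReal.exists_nat_gt hdiv
    have hlt : ℓ.toFun (D ⧸ J) < n * c :=
      (ENNReal.div_lt_iff (Or.inl hc) (Or.inl hctop)).mp hnlt
    exact (not_le.mpr hlt) (hge n)

end LengthFunction

theorem prufer_length_radical_prime {D : Type u} [CommRing D] [IsDomain D]
    (hD : IsPruferDomain D) (ℓ : LengthFunction D) (I P : Ideal D) [P.IsPrime]
    (hrad : I.radical = P) :
    ℓ.toFun (D ⧸ I) =
      ℓ.toFun (Localization.AtPrime P ⧸ I.map (algebraMap D (Localization.AtPrime P))) := by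
  classical
  rw [stepA ℓ I P]
  set J := (I.map (algebraMap D (Localization.AtPrime P))).comap
      (algebraMap D (Localization.AtPrime P)) with hJdef
  have hIJ : I ≤ J := Ideal.le_comap_map
  have hIP : I ≤ P := hrad ▸ Ideal.le_radical
  have hJex : ∀ x ∈ J, ∃ u, u ∉ P ∧ u * x ∈ I := fun x hx => loc_extract I P hx
  have hJP : J ≤ P := by
    intro x hx
    obtain ⟨u, hu, hux⟩ := hJex x hx
    exact (Ideal.IsPrime.mem_or_mem inferInstance (hIP hux)).resolve_left hu
  have hsat : ∀ t, t ∉ P → ∀ d, t * d ∈ J → d ∈ J := by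
    intro t ht d hd
    obtain ⟨v, hv⟩ := IsLocalization.map_units (Localization.AtPrime P)
      (⟨t, ht⟩ : P.primeCompl)
    rw [hJdef, Ideal.mem_comap, map_mul] at hd
    rw [hJdef, Ideal.mem_comap]
    have heq : algebraMap D (Localization.AtPrime P) d =
        ↑v⁻¹ * (algebraMap D (Localization.AtPrime P) t *
          algebraMap D (Localization.AtPrime P) d) := by
      rw [← mul_assoc, ← hv, Units.inv_mul, one_mul]
    rw [heq]
    exact Ideal.mul_mem_left _ _ hd
  by_cases hz : ∀ x ∈ J, ℓ.toFun (D ⧸ I.colon (Ideal.span {x})) = 0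
  · set N : Submodule D (D ⧸ I) := Submodule.map I.mkQ J with hNdef
    have hN0 : ℓ.toFun ↥N = 0 := by
      apply ℓ.eq_zero_of_cyclic
      rintro ⟨w, hw⟩
      obtain ⟨x, hxJ, hxw⟩ := hw
      refine ⟨I.colon (Ideal.span {x}), hz x hxJ, ?_⟩
      intro a ha
      have hax : a * x ∈ I := Ideal.mem_colon_span_singleton.mp ha
      apply Subtype.ext
      show a • w = 0
      rw [← hxw, ← map_smul, smul_eq_mul]
      exact (Submodule.Quotient.mk_eq_zero I).mpr hax
    rw [ℓ.sub_add N, hN0, zero_add]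
    exact ℓ.congr (Submodule.quotientQuotientEquivQuotient I J hIJ)
  · push_neg at hz
    obtain ⟨x, hxJ, hxne⟩ := hz
    obtain ⟨s, hs, hsx⟩ := hJex x hxJ
    have hcolon : J ⊔ Ideal.span {s} ≤ I.colon (Ideal.span {x}) := by
      refine sup_le ?_ ?_
      · intro j hj
        exact Ideal.mem_colon_span_singleton.mpr (key_local hD I P hrad hs hsx (hJP hj))
      · rw [Ideal.span_singleton_le_iff_mem]
        exact Ideal.mem_colon_span_singleton.mpr hsx
    have hcne : ℓ.toFun (D ⧸ (J ⊔ Ideal.span {s})) ≠ 0 := by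
      intro h0
      apply hxne
      refine le_antisymm ?_ zero_le
      calc ℓ.toFun (D ⧸ I.colon (Ideal.span {x}))
          ≤ ℓ.toFun (D ⧸ (J ⊔ Ideal.span {s})) := ℓ.quot_mono hcolon
        _ = 0 := h0
    have hJtop : ℓ.toFun (D ⧸ J) = ⊤ :=
      ℓ.chain_infinite J (fun d hd => hsat s hs d hd) hcne
    have hle : ℓ.toFun (D ⧸ J) ≤ ℓ.toFun (D ⧸ I) := ℓ.quot_mono hIJ
    rw [hJtop] at hle ⊢
    exact top_le_iff.mp hle
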